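/- Let X be a real random variable with a log-concave density, mean μ, and variance σ². Then for every threshold θ ≥ μ, the conditional expectation satisfies E[X | X > θ] ≤ θ + e·σ, where e is Euler's number. -/

import Mathlib

open MeasureTheory ProbabilityTheory Real
open scoped ENNReal

section Aux
open MeasureTheory Set Filter Real
open scoped ENNReal Topology

section helperIC
open intervalIntegral
lemma interval_integral_comp_mul_left' {E : Type*} [NormedAddCommGroup E] [NormedSpace ℝ E]
    {a b c : ℝ} (f : ℝ → E) (hc : c ≠ 0) :
    ∫ x in a..b, f (c * x) = c⁻¹ • ∫ x in c * a..c * b, f x :=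
  integral_comp_mul_left f hc
end helperIC

lemma fourpoint (f : ℝ → ℝ) (hf0 : ∀ x, 0 ≤ f x)
    (hlog : ConcaveOn ℝ {x | 0 < f x} (fun x => Real.log (f x)))
    {a b c d : ℝ} (hab : a ≤ b) (hac : a ≤ c) (hbd : b ≤ d) (hcd : c ≤ d)
    (hsum : b + c = a + d) : f a * f d ≤ f b * f c := by
  rcases (hf0 a).lt_or_eq with ha | ha
  swap
  · rw [← ha, zero_mul]; exact mul_nonneg (hf0 b) (hf0 c)
  rcases (hf0 d).lt_or_eq with hd | hd
  swap
  · rw [← hd, mul_zero]; exact mul_nonneg (hf0 b) (hf0 c)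
  rcases eq_or_lt_of_le (hab.trans hbd) with had | had
  · have hba : b = a := le_antisymm (had ▸ hbd) hab
    have hca : c = a := le_antisymm (had ▸ hcd) hac
    rw [hba, hca, ← had]
  · set lam := (d - b) / (d - a) with hlam
    have hda : 0 < d - a := by linarith
    have hl0 : 0 ≤ lam := div_nonneg (by linarith) hda.le
    have hl1 : lam ≤ 1 := (div_le_one hda).2 (by linarith)
    have hbb : b = lam * a + (1 - lam) * d := by rw [hlam]; field_simp [hda.ne']; ring
    have hcc : c = (1 - lam) * a + lam * d := by
      have : c = a + d - b := by linarith
      rw [this, hbb]; ring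
    have haI : a ∈ {x | 0 < f x} := ha
    have hdI : d ∈ {x | 0 < f x} := hd
    have hbI : b ∈ {x | 0 < f x} := by
      rw [hbb]; exact hlog.1 haI hdI hl0 (by linarith) (by ring)
    have hcI : c ∈ {x | 0 < f x} := by
      rw [hcc]; exact hlog.1 haI hdI (by linarith) hl0 (by ring)
    have h1 : lam * Real.log (f a) + (1 - lam) * Real.log (f d) ≤ Real.log (f b) := by
      have := hlog.2 haI hdI hl0 (by linarith : (0:ℝ) ≤ 1 - lam) (by ring)
      simpa [← hbb] using this
    have h2 : (1 - lam) * Real.log (f a) + lam * Real.log (f d) ≤ Real.log (f c) := by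
      have := hlog.2 haI hdI (by linarith : (0:ℝ) ≤ 1 - lam) hl0 (by ring)
      simpa [← hcc] using this
    have hsum2 : Real.log (f a) + Real.log (f d) ≤ Real.log (f b) + Real.log (f c) := by
      have := add_le_add h1 h2; linarith
    have := Real.exp_le_exp.2 hsum2
    rwa [Real.exp_add, Real.exp_add, Real.exp_log haI, Real.exp_log hdI,
      Real.exp_log hbI, Real.exp_log hcI] at this

lemma aemeas_of_logconcave (f : ℝ → ℝ)
    (hlog : ConcaveOn ℝ {x | 0 < f x} (fun x => Real.log (f x)))
    (hf0 : ∀ x, 0 ≤ f x) : AEMeasurable f volume := by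
  have hconv : Convex ℝ {x | 0 < f x} := hlog.1
  have hci : ContinuousOn (fun x => Real.log (f x)) (interior {x | 0 < f x}) :=
    ConcaveOn.continuousOn isOpen_interior (hlog.subset interior_subset hconv.interior)
  have hcf : ContinuousOn f (interior {x | 0 < f x}) := by
    have h2 : ContinuousOn (fun x => Real.exp (Real.log (f x))) (interior {x | 0 < f x}) :=
      Real.continuous_exp.comp_continuousOn hci
    refine h2.congr fun x hx => ?_
    have hx' : x ∈ {x : ℝ | 0 < f x} := interior_subset hx
    simp [Real.exp_log hx']
  have hmg : AEMeasurable ((interior {x | 0 < f x}).indicator f) volume := by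
    rw [aemeasurable_indicator_iff isOpen_interior.measurableSet]
    exact hcf.aemeasurable isOpen_interior.measurableSet
  have hnull : volume (frontier {x | 0 < f x}) = 0 := Convex.addHaar_frontier volume hconv
  refine hmg.congr ?_
  have hsub : {x | (interior {x | 0 < f x}).indicator f x ≠ f x} ⊆ frontier {x | 0 < f x} := by
    intro x hx
    by_cases hxi : x ∈ interior {x | 0 < f x}
    · exact absurd (Set.indicator_of_mem hxi f) hx
    · have hfx : f x ≠ 0 := by
        intro h0
        exact hx (by simp [Set.indicator_of_notMem hxi, h0])
      have hxI : x ∈ {x : ℝ | 0 < f x} := lt_of_le_of_ne (hf0 x) (Ne.symm hfx)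
      exact ⟨subset_closure hxI, hxi⟩
  exact measure_mono_null hsub hnull

lemma ratio_lemma (f : ℝ → ℝ) (hf0 : ∀ x, 0 ≤ f x)
    (hlog : ConcaveOn ℝ {x | 0 < f x} (fun x => Real.log (f x)))
    {x y t : ℝ} (hxy : x ≤ y) (ht : 0 ≤ t) :
    (volume.withDensity (fun u => ENNReal.ofReal (f u))) (Ioi (y + t)) *
      (volume.withDensity (fun u => ENNReal.ofReal (f u))) (Ioi x) ≤
    (volume.withDensity (fun u => ENNReal.ofReal (f u))) (Ioi (x + t)) *
      (volume.withDensity (fun u => ENNReal.ofReal (f u))) (Ioi y) := by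
  set F : ℝ → ℝ≥0∞ := fun u => ENNReal.ofReal (f u) with hFdef
  have hF : AEMeasurable F volume :=
    ENNReal.measurable_ofReal.comp_aemeasurable (aemeas_of_logconcave f hlog hf0)
  have key : ∀ z : ℝ, volume.withDensity F (Ioi z) = ∫⁻ u in Ioi z, F u :=
    fun z => withDensity_apply F measurableSet_Ioi
  have hGm : AEMeasurable (fun u => F (u + t)) volume :=
    hF.comp_quasiMeasurePreserving (measurePreserving_add_right volume t).quasiMeasurePreserving
  have shift : ∀ z : ℝ, (∫⁻ u in Ioi (z + t), F u) = ∫⁻ u in Ioi z, F (u + t) := by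
    intro z
    have hpre : (fun u : ℝ => u + t) ⁻¹' (Ioi (z + t)) = Ioi z := by
      ext u; simp only [mem_preimage, mem_Ioi]; constructor <;> intro <;> linarith
    have mp : MeasurePreserving (fun u : ℝ => u + t)
        (volume.restrict (Ioi z)) (volume.restrict (Ioi (z + t))) := by
      have h := (measurePreserving_add_right volume t).restrict_preimage
        (measurableSet_Ioi (a := z + t))
      rwa [hpre] at h
    have hF' : AEMeasurable F (Measure.map (fun u => u + t) (volume.restrict (Ioi z))) :=
      mp.map_eq.symm ▸ hF.restrict
    rw [← mp.map_eq, lintegral_map' hF' (measurable_add_const t).aemeasurable]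
  rw [key, key, key, key, shift y, shift x]
  have hsplit : ∀ G : ℝ → ℝ≥0∞,
      (∫⁻ u in Ioi x, G u) = (∫⁻ u in Ioc x y, G u) + (∫⁻ u in Ioi y, G u) := by
    intro G
    rw [← lintegral_union measurableSet_Ioi (Ioc_disjoint_Ioi le_rfl), Ioc_union_Ioi_eq_Ioi hxy]
  rw [hsplit F, hsplit (fun u => F (u + t))]
  have main : (∫⁻ u in Ioi y, F (u + t)) * (∫⁻ v in Ioc x y, F v) ≤
      (∫⁻ u in Ioc x y, F (u + t)) * (∫⁻ v in Ioi y, F v) := by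
    rw [← lintegral_prod_mul hGm.restrict hF.restrict,
        ← lintegral_prod_mul hGm.restrict hF.restrict]
    have hswap : (∫⁻ z, F (z.1 + t) * F z.2
          ∂((volume.restrict (Ioc x y)).prod (volume.restrict (Ioi y))))
        = ∫⁻ z, F (z.2 + t) * F z.1
          ∂((volume.restrict (Ioi y)).prod (volume.restrict (Ioc x y))) := by
      rw [← Measure.prod_swap]
      have hm : AEMeasurable (fun w : ℝ × ℝ => F (w.1 + t) * F w.2)
          (Measure.map Prod.swap ((volume.restrict (Ioi y)).prod (volume.restrict (Ioc x y)))) := by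
        rw [Measure.prod_swap]
        exact ((hGm.restrict.comp_quasiMeasurePreserving Measure.quasiMeasurePreserving_fst)).mul
          ((hF.restrict.comp_quasiMeasurePreserving Measure.quasiMeasurePreserving_snd))
      rw [lintegral_map' hm measurable_swap.aemeasurable]
      rfl
    rw [hswap]
    rw [Measure.prod_restrict]
    refine lintegral_mono_ae (ae_restrict_of_forall_mem
      (measurableSet_Ioi.prod measurableSet_Ioc) fun z hz => ?_)
    obtain ⟨hz1, hz2⟩ := hz
    have hvu : z.2 ≤ z.1 := le_trans hz2.2 (le_of_lt hz1)
    have h4 : f z.2 * f (z.1 + t) ≤ f (z.2 + t) * f z.1 :=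
      fourpoint f hf0 hlog (by linarith) hvu (by linarith) (by linarith) (by ring)
    calc F (z.1 + t) * F z.2 = ENNReal.ofReal (f z.2 * f (z.1 + t)) := by
          rw [ENNReal.ofReal_mul (hf0 z.2)]; ring
      _ ≤ ENNReal.ofReal (f (z.2 + t) * f z.1) := ENNReal.ofReal_le_ofReal h4
      _ = F (z.2 + t) * F z.1 := by rw [ENNReal.ofReal_mul (hf0 _)]
  calc (∫⁻ u in Ioi y, F (u + t)) * ((∫⁻ u in Ioc x y, F u) + ∫⁻ u in Ioi y, F u)
      = (∫⁻ u in Ioi y, F (u + t)) * (∫⁻ u in Ioc x y, F u) +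
        (∫⁻ u in Ioi y, F (u + t)) * (∫⁻ u in Ioi y, F u) := by rw [mul_add]
    _ ≤ (∫⁻ u in Ioc x y, F (u + t)) * (∫⁻ u in Ioi y, F u) +
        (∫⁻ u in Ioi y, F (u + t)) * (∫⁻ u in Ioi y, F u) := add_le_add_left main _
    _ = ((∫⁻ u in Ioc x y, F (u + t)) + ∫⁻ u in Ioi y, F (u + t)) * (∫⁻ u in Ioi y, F u) := by
        rw [add_mul]

lemma grid_decay (S : ℝ → ℝ) (hS0 : ∀ z, 0 ≤ S z)
    (hanti : ∀ a b : ℝ, a ≤ b → S b ≤ S a)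
    (hratioR : ∀ x y t : ℝ, x ≤ y → 0 ≤ t → S (y + t) * S x ≤ S (x + t) * S y)
    (μ t₀ : ℝ) (ht₀ : 0 < t₀) (hq0 : 0 < S μ) (hq1 : 0 < S (μ + t₀)) :
    (∀ k : ℕ, S (μ + (k : ℝ) * t₀) ≤ S μ * (S (μ + t₀) / S μ) ^ k) ∧
    (∀ k : ℕ, S (μ - (k : ℝ) * t₀) ≤ S μ * (S μ / S (μ + t₀)) ^ k) := by
  set q := S μ with hqdef
  set q₁ := S (μ + t₀) with hq₁def
  -- right grid recurrence
  have hgridR : ∀ k : ℕ, S (μ + ((k : ℝ) + 1) * t₀) * q ≤ S (μ + (k : ℝ) * t₀) * q₁ := by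
    intro k
    induction k with
    | zero => simp [hqdef, hq₁def, mul_comm]
    | succ k IH =>
      have hr := hratioR (μ + (k : ℝ) * t₀) (μ + ((k : ℝ) + 1) * t₀) t₀
        (by nlinarith) ht₀.le
      rw [show μ + ((k : ℝ) + 1) * t₀ + t₀ = μ + ((k : ℝ) + 1 + 1) * t₀ by ring,
        show μ + (k : ℝ) * t₀ + t₀ = μ + ((k : ℝ) + 1) * t₀ by ring] at hr
      push_cast
      set s0 := S (μ + (k : ℝ) * t₀) with hs0def
      set s1 := S (μ + ((k : ℝ) + 1) * t₀) with hs1def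
      set s2 := S (μ + ((k : ℝ) + 1 + 1) * t₀) with hs2def
      rcases le_or_gt s1 0 with h0 | h0
      · have hs1z : s1 = 0 := le_antisymm h0 (hS0 _)
        have hs2z : s2 = 0 := by
          have : s2 ≤ s1 := hanti _ _ (by nlinarith)
          exact le_antisymm (hs1z ▸ this) (hS0 _)
        rw [hs1z, hs2z]; simp
      · have IH' : s1 * q ≤ s0 * q₁ := by
          have := IH; push_cast at this; exact this
        have hs0 : 0 < s0 := lt_of_lt_of_le h0 (hanti _ _ (by nlinarith))
        have h2 : s2 * q * (s0 * q₁) ≤ s1 * q₁ * (s0 * q₁) := by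
          calc s2 * q * (s0 * q₁) = (s2 * s0) * (q * q₁) := by ring
            _ ≤ (s1 * s1) * (q * q₁) := by
                refine mul_le_mul_of_nonneg_right hr (by positivity)
            _ = (s1 * q) * (s1 * q₁) := by ring
            _ ≤ (s0 * q₁) * (s1 * q₁) := by
                refine mul_le_mul_of_nonneg_right IH' (by positivity)
            _ = s1 * q₁ * (s0 * q₁) := by ring
        exact le_of_mul_le_mul_right h2 (by positivity)
  -- left grid recurrence
  have hlq : ∀ k : ℕ, q ≤ S (μ - (k : ℝ) * t₀) := by
    intro k; exact hanti _ _ (by nlinarith [Nat.cast_nonneg (α := ℝ) k])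
  have hgridL : ∀ k : ℕ, S (μ - ((k : ℝ) + 1) * t₀) * q₁ ≤ S (μ - (k : ℝ) * t₀) * q := by
    intro k
    induction k with
    | zero =>
      have hr := hratioR (μ - t₀) μ t₀ (by linarith) ht₀.le
      rw [show μ - t₀ + t₀ = μ by ring] at hr
      push_cast
      rw [show μ - (0 + 1) * t₀ = μ - t₀ by ring, show μ - 0 * t₀ = μ by ring]
      nlinarith [hr]
    | succ k IH =>
      have hr := hratioR (μ - ((k : ℝ) + 1 + 1) * t₀) (μ - ((k : ℝ) + 1) * t₀) t₀
        (by nlinarith) ht₀.le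
      rw [show μ - ((k : ℝ) + 1) * t₀ + t₀ = μ - (k : ℝ) * t₀ by ring,
        show μ - ((k : ℝ) + 1 + 1) * t₀ + t₀ = μ - ((k : ℝ) + 1) * t₀ by ring] at hr
      push_cast
      set l0 := S (μ - (k : ℝ) * t₀)
      set l1 := S (μ - ((k : ℝ) + 1) * t₀)
      set l2 := S (μ - ((k : ℝ) + 1 + 1) * t₀)
      have IH' : l1 * q₁ ≤ l0 * q := by have := IH; push_cast at this; exact this
      have hl0 : 0 < l0 := lt_of_lt_of_le hq0 (hlq k)
      have hl1 : 0 < l1 := lt_of_lt_of_le hq0 (by have := hlq (k + 1); push_cast at this; exact this)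
      have h2 : l2 * q₁ * (l0 * q) ≤ l1 * q * (l0 * q) := by
        calc l2 * q₁ * (l0 * q) = (l2 * l0) * (q * q₁) := by ring
          _ ≤ (l1 * l1) * (q * q₁) := by
              refine mul_le_mul_of_nonneg_right ?_ (by positivity)
              linarith [hr]
          _ = (l1 * q) * (l1 * q₁) := by ring
          _ ≤ (l1 * q) * (l0 * q) := by
              refine mul_le_mul_of_nonneg_left IH' (by positivity)
          _ = l1 * q * (l0 * q) := by ring
      exact le_of_mul_le_mul_right h2 (by positivity)
  constructor
  · intro k
    induction k with
    | zero => simp [hqdef]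
    | succ k IH =>
      have h := hgridR k
      have h' : S (μ + ((k : ℝ) + 1) * t₀) ≤ S (μ + (k : ℝ) * t₀) * (q₁ / q) := by
        rw [mul_div_assoc'] at *
        exact (le_div_iff₀ hq0).mpr h
      push_cast
      calc S (μ + ((k : ℝ) + 1) * t₀) ≤ S (μ + (k : ℝ) * t₀) * (q₁ / q) := h'
        _ ≤ (q * (q₁ / q) ^ k) * (q₁ / q) := by
            refine mul_le_mul_of_nonneg_right IH (by positivity)
        _ = q * (q₁ / q) ^ (k + 1) := by ring
  · intro k
    induction k with
    | zero => simp [hqdef]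
    | succ k IH =>
      have h := hgridL k
      have h' : S (μ - ((k : ℝ) + 1) * t₀) ≤ S (μ - (k : ℝ) * t₀) * (q / q₁) := by
        rw [mul_div_assoc'] at *
        exact (le_div_iff₀ hq1).mpr h
      push_cast
      calc S (μ - ((k : ℝ) + 1) * t₀) ≤ S (μ - (k : ℝ) * t₀) * (q / q₁) := h'
        _ ≤ (q * (q / q₁) ^ k) * (q / q₁) := by
            refine mul_le_mul_of_nonneg_right IH (by positivity)
        _ = q * (q / q₁) ^ (k + 1) := by ring

lemma pointwise_decay (S : ℝ → ℝ) (hS0 : ∀ z, 0 ≤ S z)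
    (hanti : ∀ a b : ℝ, a ≤ b → S b ≤ S a)
    (hratioR : ∀ x y t : ℝ, x ≤ y → 0 ≤ t → S (y + t) * S x ≤ S (x + t) * S y)
    (μ t₀ : ℝ) (ht₀ : 0 < t₀) (hq0 : 0 < S μ) (hq1 : 0 < S (μ + t₀)) :
    (∀ t : ℝ, 0 ≤ t → S (μ + t) ≤ S μ * Real.exp (Real.log (S μ / S (μ + t₀))) *
        Real.exp (-(Real.log (S μ / S (μ + t₀)) / t₀ * t))) ∧
    (∀ s : ℝ, 0 ≤ s → S (μ - s) ≤ S μ * Real.exp (Real.log (S μ / S (μ + t₀))) *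
        Real.exp (Real.log (S μ / S (μ + t₀)) / t₀ * s)) := by
  obtain ⟨hR, hL⟩ := grid_decay S hS0 hanti hratioR μ t₀ ht₀ hq0 hq1
  set q := S μ
  set q₁ := S (μ + t₀)
  set u := Real.log (q / q₁) with hudef
  have hq₁q : q₁ ≤ q := hanti _ _ (by linarith)
  have hu0 : 0 ≤ u := Real.log_nonneg ((one_le_div hq1).mpr hq₁q)
  have hexp1 : q₁ / q = Real.exp (-u) := by
    rw [hudef, ← Real.log_inv, Real.exp_log (by positivity)]
    rw [inv_div]
  have hexp2 : q / q₁ = Real.exp u := by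
    rw [hudef, Real.exp_log (by positivity)]
  constructor
  · intro t ht
    set k := ⌊t / t₀⌋₊ with hkdef
    have hk1 : (k : ℝ) * t₀ ≤ t := by
      have := Nat.floor_le (div_nonneg ht ht₀.le)
      calc (k : ℝ) * t₀ ≤ t / t₀ * t₀ := by
            exact mul_le_mul_of_nonneg_right this ht₀.le
        _ = t := by field_simp
    have hk2 : t < ((k : ℝ) + 1) * t₀ := by
      have := Nat.lt_floor_add_one (t / t₀)
      calc t = t / t₀ * t₀ := by field_simp
        _ < ((k : ℝ) + 1) * t₀ := by
            exact mul_lt_mul_of_pos_right this ht₀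
    calc S (μ + t) ≤ S (μ + (k : ℝ) * t₀) := hanti _ _ (by linarith)
      _ ≤ q * (q₁ / q) ^ k := hR k
      _ = q * Real.exp (-((k:ℝ) * u)) := by
          rw [hexp1, ← Real.exp_nat_mul]; ring_nf
      _ ≤ q * Real.exp u * Real.exp (-(u / t₀ * t)) := by
          rw [mul_assoc, ← Real.exp_add]
          refine mul_le_mul_of_nonneg_left (Real.exp_le_exp.mpr ?_) hq0.le
          have h3 : u * t / t₀ ≤ u * ((k:ℝ) + 1) := by
            rw [div_le_iff₀ ht₀]
            nlinarith
          rw [div_mul_eq_mul_div, ← sub_nonneg]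
          linarith [h3]
  · intro s hs
    set k := ⌈s / t₀⌉₊ with hkdef
    have hk1 : s ≤ (k : ℝ) * t₀ := by
      have := Nat.le_ceil (s / t₀)
      calc s = s / t₀ * t₀ := by field_simp
        _ ≤ (k : ℝ) * t₀ := mul_le_mul_of_nonneg_right this ht₀.le
    have hk2 : (k : ℝ) < s / t₀ + 1 := Nat.ceil_lt_add_one (div_nonneg hs ht₀.le)
    calc S (μ - s) ≤ S (μ - (k : ℝ) * t₀) := hanti _ _ (by linarith)
      _ ≤ q * (q / q₁) ^ k := hL k
      _ = q * Real.exp ((k:ℝ) * u) := by rw [hexp2, ← Real.exp_nat_mul]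
      _ ≤ q * Real.exp u * Real.exp (u / t₀ * s) := by
          rw [mul_assoc, ← Real.exp_add]
          refine mul_le_mul_of_nonneg_left (Real.exp_le_exp.mpr ?_) hq0.le
          have h3 : (k : ℝ) * u ≤ (s / t₀ + 1) * u := by
            exact mul_le_mul_of_nonneg_right hk2.le hu0
          calc (k:ℝ) * u ≤ (s / t₀ + 1) * u := h3
            _ = u + u / t₀ * s := by ring


lemma layercake_tail (ν : Measure ℝ) [IsProbabilityMeasure ν] (θ : ℝ)
    (hgint : Integrable (fun a => max (a - θ) 0) ν) :
    (∫⁻ t in Ioi 0, ν (Ioi (θ + t)) ∂volume) = ENNReal.ofReal (∫ a, max (a - θ) 0 ∂ν) := by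
  have hgm : Measurable (fun a : ℝ => max (a - θ) 0) :=
    (measurable_id.sub measurable_const).max measurable_const
  have lc := lintegral_eq_lintegral_meas_lt ν
    (ae_of_all _ fun a => le_max_right (a - θ) 0) hgm.aemeasurable
  have hset : ∀ t ∈ Ioi (0:ℝ), ν {a | t < max (a - θ) 0} = ν (Ioi (θ + t)) := by
    intro t ht
    congr 1
    ext a
    simp only [mem_setOf_eq, mem_Ioi, lt_max_iff]
    constructor
    · rintro (h | h)
      · linarith
      · exact absurd h (not_lt.mpr (le_of_lt ht))
    · intro h; left; linarith
  rw [setLIntegral_congr_fun measurableSet_Ioi hset] at lc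
  rw [← lc, ← ofReal_integral_eq_lintegral_ofReal hgint
    (ae_of_all _ fun a => le_max_right (a - θ) 0)]

lemma gruenbaum (ν : Measure ℝ) [IsProbabilityMeasure ν]
    (hratio : ∀ x y t : ℝ, x ≤ y → 0 ≤ t →
      ν (Ioi (y + t)) * ν (Ioi x) ≤ ν (Ioi (x + t)) * ν (Ioi y))
    (μ : ℝ) (hint : Integrable (fun x => x) ν) (hmean : ∫ x, x ∂ν = μ)
    (hq : 0 < ν (Ioi μ)) :
    Real.exp (-1) ≤ (ν (Ioi μ)).toReal := by
  have hfin : ∀ s : Set ℝ, ν s ≠ ∞ := fun s => measure_ne_top ν s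
  set S : ℝ → ℝ := fun z => (ν (Ioi z)).toReal with hSdef
  have hS0 : ∀ z, 0 ≤ S z := fun z => ENNReal.toReal_nonneg
  have hanti : ∀ a b : ℝ, a ≤ b → S b ≤ S a := fun a b h =>
    ENNReal.toReal_mono (hfin _) (measure_mono (Ioi_subset_Ioi h))
  have hofS : ∀ z, ENNReal.ofReal (S z) = ν (Ioi z) := fun z => ENNReal.ofReal_toReal (hfin _)
  have hratioR : ∀ x y t : ℝ, x ≤ y → 0 ≤ t → S (y + t) * S x ≤ S (x + t) * S y := by
    intro x y t hxy ht
    rw [hSdef]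
    simp only
    rw [← ENNReal.toReal_mul, ← ENNReal.toReal_mul]
    exact ENNReal.toReal_mono (by exact ENNReal.mul_ne_top (hfin _) (hfin _))
      (hratio x y t hxy ht)
  set q := S μ with hqdef
  have hq0 : 0 < q := ENNReal.toReal_pos hq.ne' (hfin _)
  by_cases hqge : 1 ≤ q
  · calc Real.exp (-1) ≤ 1 := by
          rw [Real.exp_le_one_iff]; norm_num
      _ ≤ q := hqge
  push_neg at hqge
  -- layer cake representations
  set Ar : ℝ := ∫ a, max (a - μ) 0 ∂ν with hArdef
  have hintsub : Integrable (fun a => a - μ) ν := hint.sub (integrable_const μ)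
  have hgint : Integrable (fun a => max (a - μ) 0) ν := by
    simpa using hintsub.pos_part
  have hg'int : Integrable (fun a => max (μ - a) 0) ν := by
    simpa using ((integrable_const μ).sub hint).pos_part
  have hmean0 : ∫ a, (a - μ) ∂ν = 0 := by
    rw [integral_sub hint (integrable_const μ), hmean, integral_const]; simp
  have hxm : ∀ a : ℝ, max (a - μ) 0 - max (μ - a) 0 = a - μ := by
    intro a
    rcases le_total a μ with h | h
    · rw [max_eq_right (by linarith), max_eq_left (by linarith)]; ring
    · rw [max_eq_left (by linarith), max_eq_right (by linarith)]; ring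
  have hgg' : ∫ a, max (μ - a) 0 ∂ν = Ar := by
    have h1 := integral_sub hgint hg'int
    simp only [hxm] at h1
    rw [hmean0] at h1
    rw [hArdef]; linarith
  have hgm : Measurable (fun a : ℝ => max (a - μ) 0) :=
    (measurable_id.sub measurable_const).max measurable_const
  have hg'm : Measurable (fun a : ℝ => max (μ - a) 0) :=
    (measurable_const.sub measurable_id).max measurable_const
  have hAp : (∫⁻ t in Ioi 0, ν (Ioi (μ + t)) ∂volume) = ENNReal.ofReal Ar := by
    have lc := lintegral_eq_lintegral_meas_lt ν
      (ae_of_all _ fun a => le_max_right (a - μ) 0) hgm.aemeasurable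
    have hset : ∀ t ∈ Ioi (0:ℝ), ν {a | t < max (a - μ) 0} = ν (Ioi (μ + t)) := by
      intro t ht
      congr 1
      ext a
      simp only [mem_setOf_eq, mem_Ioi, lt_max_iff]
      constructor
      · rintro (h | h)
        · linarith
        · exact absurd h (not_lt.mpr (le_of_lt ht))
      · intro h; left; linarith
    rw [setLIntegral_congr_fun measurableSet_Ioi hset] at lc
    rw [← lc, ← ofReal_integral_eq_lintegral_ofReal hgint
      (ae_of_all _ fun a => le_max_right (a - μ) 0)]
  have hAm : (∫⁻ t in Ioi 0, ν (Iio (μ - t)) ∂volume) = ENNReal.ofReal Ar := by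
    have lc := lintegral_eq_lintegral_meas_lt ν
      (ae_of_all _ fun a => le_max_right (μ - a) 0) hg'm.aemeasurable
    have hset : ∀ t ∈ Ioi (0:ℝ), ν {a | t < max (μ - a) 0} = ν (Iio (μ - t)) := by
      intro t ht
      congr 1
      ext a
      simp only [mem_setOf_eq, mem_Iio, lt_max_iff]
      constructor
      · rintro (h | h)
        · linarith
        · exact absurd h (not_lt.mpr (le_of_lt ht))
      · intro h; left; linarith
    rw [setLIntegral_congr_fun measurableSet_Ioi hset] at lc
    rw [← lc, ← ofReal_integral_eq_lintegral_ofReal hg'int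
      (ae_of_all _ fun a => le_max_right (μ - a) 0), hgg']
  -- the key quantitative estimate
  have key : ∀ t₀ : ℝ, 0 < t₀ → 0 < S (μ + t₀) →
      -Real.log q ≤ 1 + Real.log (q / S (μ + t₀)) := by
    intro t₀ ht₀ hq1
    obtain ⟨hright, hleft⟩ := pointwise_decay S hS0 hanti hratioR μ t₀ ht₀ hq0 hq1
    set q₁ := S (μ + t₀) with hq₁def
    set u := Real.log (q / q₁) with hudef
    set β := u / t₀ with hβdef
    have hu0 : 0 ≤ u := Real.log_nonneg ((one_le_div hq1).mpr (hanti _ _ (by linarith)))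
    rcases hu0.eq_or_lt with hu | hu
    · -- u = 0 : left tail bounded below by const, divergence, contradiction
      exfalso
      have hb : ∀ t : ℝ, 0 < t → 1 - ENNReal.ofReal q ≤ ν (Iio (μ - t)) := by
        intro t ht
        have h3 : S (μ - 2 * t) ≤ q := by
          have h4 := hleft (2 * t) (by linarith)
          have hu' : u = 0 := hu.symm
          have hβ0 : β = 0 := by rw [hβdef, hu', zero_div]
          rw [hu', hβ0] at h4
          simpa using h4
        have h1 : ν (Ici (μ - t)) ≤ ENNReal.ofReal q := by
          calc ν (Ici (μ - t)) ≤ ν (Ioi (μ - 2 * t)) :=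
                measure_mono (fun a ha => lt_of_lt_of_le (by linarith : μ - 2 * t < μ - t) ha)
            _ = ENNReal.ofReal (S (μ - 2 * t)) := (hofS _).symm
            _ ≤ ENNReal.ofReal q := ENNReal.ofReal_le_ofReal h3
        calc 1 - ENNReal.ofReal q ≤ 1 - ν (Ici (μ - t)) := tsub_le_tsub_left h1 1
          _ = ν (Iio (μ - t)) := by
              rw [← prob_compl_eq_one_sub measurableSet_Ici, compl_Ici]
      have hne : 1 - ENNReal.ofReal q ≠ 0 := by
        rw [ne_eq, tsub_eq_zero_iff_le]
        exact fun h => absurd (lt_of_le_of_lt h (ENNReal.ofReal_lt_one.mpr hqge)) (lt_irrefl _)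
      have hinf : (∫⁻ t in Ioi 0, ν (Iio (μ - t)) ∂volume) = ∞ := by
        rw [eq_top_iff]
        calc (⊤ : ℝ≥0∞) = (1 - ENNReal.ofReal q) * volume (Ioi (0:ℝ)) := by
              rw [Real.volume_Ioi, ENNReal.mul_top hne]
          _ = ∫⁻ _t in Ioi (0:ℝ), (1 - ENNReal.ofReal q) ∂volume := by
              rw [setLIntegral_const]
          _ ≤ ∫⁻ t in Ioi 0, ν (Iio (μ - t)) ∂volume :=
              lintegral_mono_ae (ae_restrict_of_forall_mem measurableSet_Ioi
                fun t ht => hb t ht)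
      rw [hAm] at hinf
      exact ENNReal.ofReal_ne_top hinf
    · -- u > 0
      by_cases hcu : -Real.log q ≤ u
      · linarith
      push_neg at hcu
      have hβ : 0 < β := div_pos hu ht₀
      set c := -Real.log q with hcdef
      set s₁ := (c - u) / β with hs₁def
      have hs₁ : 0 < s₁ := div_pos (by linarith) hβ
      have hqec : q * Real.exp c = 1 := by
        rw [hcdef, Real.exp_neg, Real.exp_log hq0, mul_inv_cancel₀ hq0.ne']
      -- upper bound for Ar
      have hIntUp : IntegrableOn (fun t : ℝ => q * Real.exp u * Real.exp (-β * t))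
          (Ioi (0:ℝ)) volume := (exp_neg_integrableOn_Ioi 0 hβ).const_mul _
      have hup : ENNReal.ofReal Ar ≤ ENNReal.ofReal (q * Real.exp u * β⁻¹) := by
        rw [← hAp]
        have h1 : (∫⁻ t in Ioi 0, ν (Ioi (μ + t)) ∂volume) ≤
            ∫⁻ t in Ioi 0, ENNReal.ofReal (q * Real.exp u * Real.exp (-β * t)) ∂volume := by
          refine lintegral_mono_ae (ae_restrict_of_forall_mem measurableSet_Ioi fun t ht => ?_)
          rw [← hofS]
          refine ENNReal.ofReal_le_ofReal ?_
          have := hright t (le_of_lt ht)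
          rw [neg_mul]
          exact this
        have h2 : (∫⁻ t in Ioi 0, ENNReal.ofReal (q * Real.exp u * Real.exp (-β * t)) ∂volume)
            = ENNReal.ofReal (∫ t in Ioi 0, q * Real.exp u * Real.exp (-β * t) ∂volume) :=
          (ofReal_integral_eq_lintegral_ofReal hIntUp
            (ae_of_all _ fun t => by positivity)).symm
        have h3 : (∫ t in Ioi 0, q * Real.exp u * Real.exp (-β * t) ∂volume)
            = q * Real.exp u * β⁻¹ := by
          rw [MeasureTheory.integral_const_mul]
          congr 1
          have h4 : (fun t : ℝ => Real.exp (-β * t)) = fun t => Real.exp (-(β * t)) := by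
            funext t; rw [neg_mul]
          rw [h4]
          have h5 : (∫ t in Ioi (0:ℝ), Real.exp (-(β * t)) ∂volume)
              = β⁻¹ • ∫ x in Ioi (β * 0), Real.exp (-x) ∂volume :=
            integral_comp_mul_left_Ioi (fun y => Real.exp (-y)) 0 hβ
          rw [h5, mul_zero, integral_exp_neg_Ioi]
          simp
        rw [h2, h3] at h1
        exact h1
      -- lower bound for Ar
      have hIci : ∀ t : ℝ, 0 < t →
          ν (Ici (μ - t)) ≤ ENNReal.ofReal (q * Real.exp u * Real.exp (β * t)) := by
        intro t ht
        have hseqinv : Tendsto (fun n : ℕ => ((n : ℝ) + 1)⁻¹) atTop (𝓝 0) := by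
          simpa only [one_div] using
            (tendsto_one_div_add_atTop_nhds_zero_nat : Tendsto (fun n : ℕ => 1 / ((n:ℝ) + 1)) atTop (𝓝 0))
        have hseq : Tendsto (fun n : ℕ => q * Real.exp u * Real.exp (β * (t + ((n:ℝ)+1)⁻¹)))
            atTop (𝓝 (q * Real.exp u * Real.exp (β * t))) := by
          have harg : Tendsto (fun n : ℕ => β * (t + ((n:ℝ)+1)⁻¹)) atTop (𝓝 (β * t)) := by
            have := (tendsto_const_nhds (x := t) (f := atTop (α := ℕ))).add hseqinv
            rw [add_zero] at this
            exact this.const_mul β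
          exact ((Real.continuous_exp.tendsto _).comp harg).const_mul _
        have hreal : (ν (Ici (μ - t))).toReal ≤ q * Real.exp u * Real.exp (β * t) := by
          refine ge_of_tendsto hseq (Eventually.of_forall fun n => ?_)
          have hsub : Ici (μ - t) ⊆ Ioi (μ - (t + ((n:ℝ)+1)⁻¹)) := by
            intro a ha
            have : ((n:ℝ)+1)⁻¹ > 0 := by positivity
            simp only [mem_Ici] at ha
            simp only [mem_Ioi]
            linarith
          calc (ν (Ici (μ - t))).toReal ≤ S (μ - (t + ((n:ℝ)+1)⁻¹)) :=
                ENNReal.toReal_mono (hfin _) (measure_mono hsub)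
            _ ≤ q * Real.exp u * Real.exp (β * (t + ((n:ℝ)+1)⁻¹)) := by
                have := hleft (t + ((n:ℝ)+1)⁻¹) (by positivity)
                rw [mul_comm β] at this ⊢
                exact this
        calc ν (Ici (μ - t)) = ENNReal.ofReal ((ν (Ici (μ - t))).toReal) :=
              (ENNReal.ofReal_toReal (hfin _)).symm
          _ ≤ ENNReal.ofReal (q * Real.exp u * Real.exp (β * t)) :=
              ENNReal.ofReal_le_ofReal hreal
      have hβs₁ : β * s₁ = c - u := by
        rw [hs₁def]
        field_simp
      have hone : q * Real.exp u * Real.exp (β * s₁) = 1 := by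
        rw [hβs₁, mul_assoc, ← Real.exp_add, show u + (c - u) = c by ring]
        exact hqec
      have hcont : Continuous (fun t : ℝ => q * Real.exp u * Real.exp (β * t)) :=
        continuous_const.mul (Real.continuous_exp.comp (continuous_const.mul continuous_id))
      have hIntLow : IntegrableOn (fun t : ℝ => 1 - q * Real.exp u * Real.exp (β * t))
          (Ioc 0 s₁) volume := (continuous_const.sub hcont).integrableOn_Ioc
      have hnn2 : ∀ t ∈ Ioc (0:ℝ) s₁, 0 ≤ 1 - q * Real.exp u * Real.exp (β * t) := by
        intro t ht
        have h6 : q * Real.exp u * Real.exp (β * t) ≤ q * Real.exp u * Real.exp (β * s₁) := by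
          refine mul_le_mul_of_nonneg_left (Real.exp_le_exp.mpr ?_) (by positivity)
          exact mul_le_mul_of_nonneg_left ht.2 hβ.le
        linarith [hone]
      have hcomp : (∫ t in Ioc (0:ℝ) s₁, (1 - q * Real.exp u * Real.exp (β * t)) ∂volume)
          = (c - u - 1 + q * Real.exp u) / β := by
        rw [← intervalIntegral.integral_of_le hs₁.le]
        rw [intervalIntegral.integral_sub intervalIntegrable_const (hcont.intervalIntegrable _ _)]
        rw [intervalIntegral.integral_const]
        have h7 : (∫ t in (0:ℝ)..s₁, q * Real.exp u * Real.exp (β * t))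
            = q * Real.exp u * (β⁻¹ * (Real.exp (c - u) - 1)) := by
          rw [intervalIntegral.integral_const_mul]
          congr 1
          rw [interval_integral_comp_mul_left' Real.exp hβ.ne']
          rw [mul_zero, integral_exp, hβs₁]
          simp [Real.exp_zero, smul_eq_mul]
        rw [h7]
        have h9 : q * Real.exp u * Real.exp (c - u) = 1 := by
          rw [mul_assoc, ← Real.exp_add, show u + (c - u) = c by ring]
          exact hqec
        have h10 : Real.exp (c - u) = (q * Real.exp u)⁻¹ :=
          eq_inv_of_mul_eq_one_left (by linarith [h9, mul_comm (q * Real.exp u) (Real.exp (c - u))])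
        rw [h10, smul_eq_mul, mul_one, hs₁def]
        have hqe : q * Real.exp u ≠ 0 := by positivity
        field_simp
        ring
      have hlowchain : ENNReal.ofReal ((c - u - 1 + q * Real.exp u) / β) ≤ ENNReal.ofReal Ar := by
        rw [← hAm]
        have e1 : ENNReal.ofReal ((c - u - 1 + q * Real.exp u) / β)
            = ∫⁻ t in Ioc 0 s₁, ENNReal.ofReal (1 - q * Real.exp u * Real.exp (β * t)) ∂volume := by
          rw [← hcomp]
          exact ofReal_integral_eq_lintegral_ofReal hIntLow
            (ae_restrict_of_forall_mem measurableSet_Ioc hnn2)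
        rw [e1]
        calc (∫⁻ t in Ioc 0 s₁, ENNReal.ofReal (1 - q * Real.exp u * Real.exp (β * t)) ∂volume)
            ≤ ∫⁻ t in Ioc 0 s₁, ν (Iio (μ - t)) ∂volume := by
              refine lintegral_mono_ae (ae_restrict_of_forall_mem measurableSet_Ioc
                fun t ht => ?_)
              have h11 := hIci t ht.1
              calc ENNReal.ofReal (1 - q * Real.exp u * Real.exp (β * t))
                  = 1 - ENNReal.ofReal (q * Real.exp u * Real.exp (β * t)) := by
                    rw [ENNReal.ofReal_sub _ (by positivity), ENNReal.ofReal_one]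
                _ ≤ 1 - ν (Ici (μ - t)) := tsub_le_tsub_left h11 1
                _ = ν (Iio (μ - t)) := by
                    rw [← prob_compl_eq_one_sub measurableSet_Ici, compl_Ici]
          _ ≤ ∫⁻ t in Ioi 0, ν (Iio (μ - t)) ∂volume := lintegral_mono_set Ioc_subset_Ioi_self
      have hfinal := le_trans hlowchain hup
      rw [ENNReal.ofReal_le_ofReal_iff (by positivity)] at hfinal
      have h13 := mul_le_mul_of_nonneg_right hfinal hβ.le
      rw [div_mul_cancel₀ _ hβ.ne', mul_assoc, inv_mul_cancel₀ hβ.ne', mul_one] at h13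
      linarith
  -- pass to the limit t₀ = 1/(n+1)
  have hmono : Monotone (fun n : ℕ => Ioi (μ + ((n:ℝ)+1)⁻¹)) := by
    intro n m hnm
    apply Ioi_subset_Ioi
    have h1 : ((m:ℝ)+1)⁻¹ ≤ ((n:ℝ)+1)⁻¹ := by
      have h2 : ((n:ℝ)+1) ≤ ((m:ℝ)+1) := by
        have : (n:ℝ) ≤ (m:ℝ) := Nat.cast_le.mpr hnm
        linarith
      exact inv_anti₀ (by positivity) h2
    linarith
  have hunion : (⋃ n : ℕ, Ioi (μ + ((n:ℝ)+1)⁻¹)) = Ioi μ := by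
    ext x
    simp only [mem_iUnion, mem_Ioi]
    constructor
    · rintro ⟨n, hn⟩
      have : 0 < ((n:ℝ)+1)⁻¹ := by positivity
      linarith
    · intro hx
      obtain ⟨n, hn⟩ := exists_nat_one_div_lt (show 0 < x - μ by linarith)
      refine ⟨n, ?_⟩
      rw [one_div] at hn
      linarith
  have htend0 : Tendsto (fun n : ℕ => ν (Ioi (μ + ((n:ℝ)+1)⁻¹))) atTop (𝓝 (ν (Ioi μ))) := by
    have := tendsto_measure_iUnion_atTop (μ := ν) hmono
    rwa [hunion] at this
  have htendS : Tendsto (fun n : ℕ => S (μ + ((n:ℝ)+1)⁻¹)) atTop (𝓝 q) :=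
    (ENNReal.tendsto_toReal (hfin _)).comp htend0
  have hev : ∀ᶠ n : ℕ in atTop, 0 < S (μ + ((n:ℝ)+1)⁻¹) :=
    htendS.eventually (eventually_gt_nhds hq0)
  have htendu : Tendsto (fun n : ℕ => 1 + Real.log (q / S (μ + ((n:ℝ)+1)⁻¹))) atTop (𝓝 1) := by
    have hdiv : Tendsto (fun n : ℕ => q / S (μ + ((n:ℝ)+1)⁻¹)) atTop (𝓝 (q/q)) :=
      tendsto_const_nhds.div htendS hq0.ne'
    rw [div_self hq0.ne'] at hdiv
    have hlog := (Real.continuousAt_log one_ne_zero).tendsto.comp hdiv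
    rw [Real.log_one] at hlog
    have hfin2 := (tendsto_const_nhds (x := (1:ℝ)) (f := atTop (α := ℕ))).add hlog
    rw [add_zero] at hfin2
    exact hfin2
  have hc1 : -Real.log q ≤ 1 :=
    ge_of_tendsto htendu (hev.mono fun n hn => key _ (by positivity) hn)
  calc Real.exp (-1) ≤ Real.exp (Real.log q) := Real.exp_le_exp.mpr (by linarith)
    _ = q := Real.exp_log hq0

end Aux

open Set Filter in
/-- If a real random variable `X` has a log-concave density `f`, mean `μ` and variance `σ²`,
then for every threshold `θ ≥ μ` (with `P(X > θ) > 0`),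
`E[X | X > θ] ≤ θ + e·σ`. -/
theorem condExp_le_of_logConcave {Ω : Type*} [MeasurableSpace Ω]
    (P : Measure Ω) [IsProbabilityMeasure P]
    (X : Ω → ℝ) (hX : Measurable X)
    (f : ℝ → ℝ) (hf0 : ∀ x, 0 ≤ f x)
    (hdens : Measure.map X P = volume.withDensity (fun x => ENNReal.ofReal (f x)))
    (hlog : ConcaveOn ℝ {x | 0 < f x} (fun x => Real.log (f x)))
    (μ σ : ℝ) (hσ : 0 ≤ σ)
    (hL2 : MemLp X 2 P)
    (hmean : P[X] = μ) (hvar : variance X P = σ ^ 2)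
    (θ : ℝ) (hθ : μ ≤ θ) (hpos : 0 < P {ω | θ < X ω}) :
    (P[|{ω | θ < X ω}])[X] ≤ θ + Real.exp 1 * σ := by
  set ν := volume.withDensity (fun x => ENNReal.ofReal (f x)) with hνdef
  have hprob : IsProbabilityMeasure ν := by
    rw [← hdens]; exact Measure.isProbabilityMeasure_map hX.aemeasurable
  have hratio : ∀ x y t : ℝ, x ≤ y → 0 ≤ t →
      ν (Ioi (y + t)) * ν (Ioi x) ≤ ν (Ioi (x + t)) * ν (Ioi y) :=
    fun x y t hxy ht => ratio_lemma f hf0 hlog hxy ht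
  have hintX : Integrable X P := hL2.integrable one_le_two
  have hidm : AEStronglyMeasurable (fun a : ℝ => a) (Measure.map X P) :=
    aestronglyMeasurable_id
  have hintν : Integrable (fun a : ℝ => a) ν := by
    rw [← hdens]
    exact (integrable_map_measure hidm hX.aemeasurable).mpr hintX
  have hmeanν : ∫ a, a ∂ν = μ := by
    rw [← hdens, integral_map hX.aemeasurable hidm]; exact hmean
  have hPA : P {ω | θ < X ω} = ν (Ioi θ) := by
    rw [← hdens, Measure.map_apply hX measurableSet_Ioi]; rfl
  set p := ν (Ioi θ) with hpdef
  have hp0 : 0 < p := hPA ▸ hpos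
  have hpfin : p ≠ ⊤ := measure_ne_top ν _
  have hpr : 0 < p.toReal := ENNReal.toReal_pos hp0.ne' hpfin
  have hμθ : p ≤ ν (Ioi μ) := measure_mono (Ioi_subset_Ioi hθ)
  have hμpos : 0 < ν (Ioi μ) := lt_of_lt_of_le hp0 hμθ
  have hgr : Real.exp (-1) ≤ (ν (Ioi μ)).toReal := gruenbaum ν hratio μ hintν hmeanν hμpos
  have hgintθ : Integrable (fun a => max (a - θ) 0) ν := by
    simpa using (hintν.sub (integrable_const θ)).pos_part
  have hgintμ : Integrable (fun a => max (a - μ) 0) ν := by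
    simpa using (hintν.sub (integrable_const μ)).pos_part
  set Arθ := ∫ a, max (a - θ) 0 ∂ν with hArθdef
  set Arμ := ∫ a, max (a - μ) 0 ∂ν with hArμdef
  have hArθ0 : 0 ≤ Arθ := integral_nonneg fun a => le_max_right _ _
  -- `E[(X-μ)⁺] ≤ σ`
  have hEY : Arμ ≤ σ := by
    have hY2 : MemLp (fun ω => X ω - μ) 2 P := hL2.sub (memLp_const μ)
    have hYint : Integrable (fun ω => X ω - μ) P := hintX.sub (integrable_const μ)
    have hYsq : Integrable (fun ω => (X ω - μ) ^ 2) P := hY2.integrable_sq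
    have habs : Integrable (fun ω => |X ω - μ|) P := hYint.abs
    set E := ∫ ω, |X ω - μ| ∂P with hEdef
    have hE0 : 0 ≤ E := integral_nonneg fun ω => abs_nonneg _
    have hvar' : ∫ ω, (X ω - μ) ^ 2 ∂P = σ ^ 2 := by
      have h := (variance_eq_integral hX.aemeasurable).trans
        (by rfl : _ = ∫ ω, (((X - fun _ => P[X]) ^ 2 : Ω → ℝ)) ω ∂P)
      rw [hvar, hmean] at h
      rw [h]
      refine integral_congr_ae (ae_of_all _ fun ω => ?_)
      simp [Pi.pow_apply, Pi.sub_apply]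
    have hexp : ∫ ω, (|X ω - μ| - E) ^ 2 ∂P = σ ^ 2 - E ^ 2 := by
      have h1 : ∀ ω, (|X ω - μ| - E) ^ 2
          = ((X ω - μ) ^ 2 - (2 * E) * |X ω - μ|) + E ^ 2 := fun ω => by
        rw [sub_sq, sq_abs]; ring
      have hint1 : Integrable (fun ω => (X ω - μ) ^ 2 - (2 * E) * |X ω - μ|) P :=
        hYsq.sub (habs.const_mul (2 * E))
      have hint2 : Integrable (fun ω => (2 * E) * |X ω - μ|) P := habs.const_mul (2 * E)
      rw [integral_congr_ae (ae_of_all _ h1)]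
      rw [integral_add hint1 (integrable_const (E ^ 2))]
      rw [integral_sub hYsq hint2]
      rw [integral_const_mul, integral_const, hvar', probReal_univ]
      simp only [ENNReal.toReal_one, smul_eq_mul, one_mul, ← hEdef]
      ring
    have hnonneg : 0 ≤ σ ^ 2 - E ^ 2 := hexp ▸ integral_nonneg (fun ω => sq_nonneg _)
    have hEσ : E ≤ σ := by nlinarith [hnonneg, hE0, hσ]
    have hArμE : Arμ ≤ E := by
      have hmm : AEStronglyMeasurable (fun a : ℝ => max (a - μ) 0) (Measure.map X P) :=
        ((measurable_id.sub measurable_const).max measurable_const).aestronglyMeasurable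
      rw [hArμdef, ← hdens, integral_map hX.aemeasurable hmm]
      refine le_trans (integral_mono ?_ habs fun ω => ?_) le_rfl
      · simpa using (hintX.sub (integrable_const μ)).pos_part
      · exact max_le (le_abs_self _) (abs_nonneg _)
    linarith
  -- integrate the ratio inequality
  have hm1 : Measurable (fun t : ℝ => ν (Ioi (θ + t))) := by
    refine Antitone.measurable fun a b hab => ?_
    exact measure_mono (Ioi_subset_Ioi (by linarith))
  have hm2 : Measurable (fun t : ℝ => ν (Ioi (μ + t))) := by
    refine Antitone.measurable fun a b hab => ?_
    exact measure_mono (Ioi_subset_Ioi (by linarith))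
  have hTineq : (∫⁻ t in Ioi 0, ν (Ioi (θ + t)) ∂volume) * ν (Ioi μ)
      ≤ (∫⁻ t in Ioi 0, ν (Ioi (μ + t)) ∂volume) * p := by
    rw [← lintegral_mul_const _ hm1, ← lintegral_mul_const _ hm2]
    exact lintegral_mono_ae (ae_restrict_of_forall_mem measurableSet_Ioi
      fun t ht => hratio μ θ t hθ ht.le)
  rw [layercake_tail ν θ hgintθ, layercake_tail ν μ hgintμ] at hTineq
  have h1 : ENNReal.ofReal Arθ * ENNReal.ofReal (Real.exp (-1)) ≤ ENNReal.ofReal σ * p := by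
    calc ENNReal.ofReal Arθ * ENNReal.ofReal (Real.exp (-1))
        ≤ ENNReal.ofReal Arθ * ν (Ioi μ) := by
          refine mul_le_mul_right ?_ _
          calc ENNReal.ofReal (Real.exp (-1)) ≤ ENNReal.ofReal ((ν (Ioi μ)).toReal) :=
                ENNReal.ofReal_le_ofReal hgr
            _ = ν (Ioi μ) := ENNReal.ofReal_toReal (measure_ne_top ν _)
      _ ≤ ENNReal.ofReal Arμ * p := hTineq
      _ ≤ ENNReal.ofReal σ * p := mul_le_mul_left (ENNReal.ofReal_le_ofReal hEY) p
  have h2 : Arθ * Real.exp (-1) ≤ σ * p.toReal := by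
    rw [← ENNReal.ofReal_mul hArθ0] at h1
    rw [show p = ENNReal.ofReal p.toReal from (ENNReal.ofReal_toReal hpfin).symm,
      ← ENNReal.ofReal_mul hσ] at h1
    exact (ENNReal.ofReal_le_ofReal_iff (by positivity)).mp h1
  have h3 : Arθ ≤ Real.exp 1 * σ * p.toReal := by
    calc Arθ = Arθ * (Real.exp (-1) * Real.exp 1) := by
          rw [← Real.exp_add]; norm_num
      _ = (Arθ * Real.exp (-1)) * Real.exp 1 := by ring
      _ ≤ (σ * p.toReal) * Real.exp 1 := mul_le_mul_of_nonneg_right h2 (Real.exp_pos 1).le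
      _ = Real.exp 1 * σ * p.toReal := by ring
  -- Bochner side
  have hsetint : ∫ ω in {ω | θ < X ω}, X ω ∂P = ∫ a in Ioi θ, a ∂ν := by
    rw [← hdens]
    exact (setIntegral_map measurableSet_Ioi hidm hX.aemeasurable).symm
  have hIθ : ∫ a in Ioi θ, (a - θ) ∂ν = Arθ := by
    rw [hArθdef]
    rw [show (fun a : ℝ => max (a - θ) 0) = (Ioi θ).indicator (fun a => a - θ) from ?_]
    · rw [integral_indicator measurableSet_Ioi]
    · funext a
      by_cases h : a ∈ Ioi θ
      · rw [indicator_of_mem h]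
        exact max_eq_left (by simp only [mem_Ioi] at h; linarith)
      · rw [indicator_of_notMem h]
        refine max_eq_right ?_
        simp only [mem_Ioi, not_lt] at h
        linarith
  have hsplit2 : ∫ a in Ioi θ, a ∂ν = Arθ + θ * p.toReal := by
    have e1 : ∫ a in Ioi θ, a ∂ν = ∫ a in Ioi θ, ((a - θ) + θ) ∂ν := by norm_num
    have hi1 : IntegrableOn (fun a : ℝ => a - θ) (Ioi θ) ν :=
      hintν.integrableOn.sub (integrableOn_const (measure_ne_top ν _))
    have hi2 : IntegrableOn (fun _ : ℝ => θ) (Ioi θ) ν :=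
      integrableOn_const (measure_ne_top ν _)
    rw [e1, integral_add hi1 hi2]
    rw [hIθ, setIntegral_const]
    simp only [smul_eq_mul, measureReal_def, ← hpdef]
    ring
  have hcond : (P[|{ω | θ < X ω}])[X] = (p.toReal)⁻¹ * ∫ ω in {ω | θ < X ω}, X ω ∂P := by
    show ∫ ω, X ω ∂((P {ω | θ < X ω})⁻¹ • P.restrict {ω | θ < X ω}) = _
    rw [integral_smul_measure, hPA, ENNReal.toReal_inv]
    rfl
  rw [hcond, hsetint, hsplit2]
  have h4 : Arθ + θ * p.toReal ≤ (θ + Real.exp 1 * σ) * p.toReal := by nlinarith [h3]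
  calc (p.toReal)⁻¹ * (Arθ + θ * p.toReal)
      ≤ (p.toReal)⁻¹ * ((θ + Real.exp 1 * σ) * p.toReal) :=
        mul_le_mul_of_nonneg_left h4 (inv_nonneg.mpr hpr.le)
    _ = θ + Real.exp 1 * σ := by field_simp
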